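/- Let m, x, y ∈ ℤ with gcd(x, y) = 1, and let F_m(X, Y) = X⁴ − mX³Y − 6X²Y² + mXY³ + Y⁴. If F_m(x, y) divides (m² + 16)·xy(x + y)(x − y), then F_m(x, y) divides 4(m² + 16). -/

import Mathlib

open Polynomial

/-- The simplest quartic polynomial `X^4 - a*X^3 - 6*X^2 + a*X + 1`. -/
noncomputable def simplestQuartic {K : Type*} [Field K] (a : K) : K[X] :=
  X ^ 4 - C a * X ^ 3 - 6 * X ^ 2 + C a * X + 1

/-- The splitting field of `p` over `K` inside a fixed algebraic closure of `K`. -/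
noncomputable def splittingFieldIn (K : Type*) [Field K] (p : K[X]) :
    IntermediateField K (AlgebraicClosure K) :=
  IntermediateField.adjoin K (p.rootSet (AlgebraicClosure K))

/-- The binary quartic form `F_m(x, y) = x^4 - m*x^3*y - 6*x^2*y^2 + m*x*y^3 + y^4`. -/
def Fq (m x y : ℤ) : ℤ := x ^ 4 - m * x ^ 3 * y - 6 * x ^ 2 * y ^ 2 + m * x * y ^ 3 + y ^ 4

/-- `L_m`: the splitting field of the simplest quartic polynomial `f_m` over `ℚ`
inside a fixed algebraic closure of `ℚ`. -/
noncomputable def Lq (m : ℤ) : IntermediateField ℚ (AlgebraicClosure ℚ) :=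
  splittingFieldIn ℚ (simplestQuartic (m : ℚ))

lemma zmod8_aux : ∀ u v w : ZMod 8,
    (2*u+1)^4 - w*(2*u+1)^3*(2*v+1) - 6*(2*u+1)^2*(2*v+1)^2
      + w*(2*u+1)*(2*v+1)^3 + (2*v+1)^4 = 4 := by decide

lemma odd_isCoprime_two {d : ℤ} (h : Odd d) : IsCoprime d 2 := by
  obtain ⟨k, hk⟩ := h
  exact ⟨1, -k, by omega⟩

theorem simplest_quartic_dvd_of_dvd
    (m x y : ℤ) (hgcd : Int.gcd x y = 1)
    (h : Fq m x y ∣ (m ^ 2 + 16) * (x * y * (x + y) * (x - y))) :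
    Fq m x y ∣ 4 * (m ^ 2 + 16) := by
  set d := Fq m x y with hd
  have hco : IsCoprime x y := Int.isCoprime_iff_gcd_eq_one.mpr hgcd
  have hdx : IsCoprime x d := by
    have h1 : IsCoprime x (y ^ 4) := hco.pow_right
    have h2 : d = y ^ 4 + x * (x ^ 3 - m * x ^ 2 * y - 6 * x * y ^ 2 + m * y ^ 3) := by
      rw [hd]; unfold Fq; ring
    rw [h2]
    exact h1.add_mul_left_right _
  have hdy : IsCoprime y d := by
    have h1 : IsCoprime y (x ^ 4) := hco.symm.pow_right
    have h2 : d = x ^ 4 + y * (-(m * x ^ 3) - 6 * x ^ 2 * y + m * x * y ^ 2 + y ^ 3) := by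
      rw [hd]; unfold Fq; ring
    rw [h2]
    exact h1.add_mul_left_right _
  have hdxy : IsCoprime (x * y) d := hdx.mul_left hdy
  -- step: d ∣ (m^2+16)*(x+y)*(x-y)
  have h2 : d ∣ (m ^ 2 + 16) * (x + y) * (x - y) := by
    apply hdxy.symm.dvd_of_dvd_mul_right
    have : (m ^ 2 + 16) * (x + y) * (x - y) * (x * y)
        = (m ^ 2 + 16) * (x * y * (x + y) * (x - y)) := by ring
    rw [this]; exact h
  -- step: d ∣ A*B
  have hAB : d ∣ (2*x^2 - m*x*y - 2*y^2) * (m*x^2 + 8*x*y - m*y^2) := by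
    have hid : (2*x^2 - m*x*y - 2*y^2) * (m*x^2 + 8*x*y - m*y^2)
        = 2 * m * d + (m ^ 2 + 16) * (x * y * (x + y) * (x - y)) := by
      rw [hd]; unfold Fq; ring
    rw [hid]
    exact dvd_add (Dvd.intro_left _ rfl) h
  -- step: d ∣ 8*(m^2+16)*x^2*y^2
  have h8xy : d ∣ 8 * (m ^ 2 + 16) * (x ^ 2 * y ^ 2) := by
    have hid : 8 * (m ^ 2 + 16) * (x ^ 2 * y ^ 2)
        = (2*x^2 - m*x*y - 2*y^2) * ((m ^ 2 + 16) * (x + y) * (x - y))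
          - 32 * d - m * ((2*x^2 - m*x*y - 2*y^2) * (m*x^2 + 8*x*y - m*y^2)) := by
      rw [hd]; unfold Fq; ring
    rw [hid]
    exact dvd_sub (dvd_sub (Dvd.dvd.mul_left h2 _) (Dvd.dvd.mul_left dvd_rfl 32))
      (Dvd.dvd.mul_left hAB m)
  -- step: d ∣ 8*(m^2+16)
  have h8 : d ∣ 8 * (m ^ 2 + 16) := by
    have hcop : IsCoprime d (x ^ 2 * y ^ 2) := by
      have : IsCoprime ((x*y)^2) d := hdxy.pow_left
      have := this.symm
      have he : (x * y) ^ 2 = x ^ 2 * y ^ 2 := by ring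
      rwa [he] at this
    exact hcop.dvd_of_dvd_mul_right h8xy
  -- parity endgame
  rcases Int.even_or_odd x with hx | hx
  · -- x even, so y odd, d odd
    have hyodd : Odd y := by
      rcases Int.even_or_odd y with hy | hy
      · exfalso
        obtain ⟨a, ha⟩ := hx; obtain ⟨b, hb⟩ := hy
        have : (2 : ℤ) ∣ Int.gcd x y := by
          have h2x : (2:ℤ) ∣ x := ⟨a, by omega⟩
          have h2y : (2:ℤ) ∣ y := ⟨b, by omega⟩
          exact Int.dvd_coe_gcd h2x h2y
        omega
      · exact hy
    have hdodd : Odd d := by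
      have h2 : d = x * (x ^ 3 - m * x ^ 2 * y - 6 * x * y ^ 2 + m * y ^ 3) + y ^ 4 := by
        rw [hd]; unfold Fq; ring
      rw [h2]
      exact (hx.mul_right _).add_odd (hyodd.pow)
    have : d ∣ 2 * (4 * (m ^ 2 + 16)) := by
      have he : 2 * (4 * (m ^ 2 + 16)) = 8 * (m ^ 2 + 16) := by ring
      rw [he]; exact h8
    exact (odd_isCoprime_two hdodd).dvd_of_dvd_mul_left this
  · rcases Int.even_or_odd y with hy | hy
    · -- y even, x odd
      have hdodd : Odd d := by
        have h2 : d = y * (-(m * x ^ 3) - 6 * x ^ 2 * y + m * x * y ^ 2 + y ^ 3) + x ^ 4 := by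
          rw [hd]; unfold Fq; ring
        rw [h2]
        exact (hy.mul_right _).add_odd (hx.pow)
      have : d ∣ 2 * (4 * (m ^ 2 + 16)) := by
        have he : 2 * (4 * (m ^ 2 + 16)) = 8 * (m ^ 2 + 16) := by ring
        rw [he]; exact h8
      exact (odd_isCoprime_two hdodd).dvd_of_dvd_mul_left this
    · -- both odd : d ≡ 4 mod 8
      obtain ⟨a, ha⟩ := hx
      obtain ⟨b, hb⟩ := hy
      have hcast : ((d - 4 : ℤ) : ZMod 8) = 0 := by
        rw [hd]; unfold Fq
        subst ha hb
        push_cast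
        rw [sub_eq_zero]
        have := zmod8_aux (a : ZMod 8) (b : ZMod 8) (m : ZMod 8)
        push_cast at this ⊢
        linear_combination this
      have h8dvd : (8 : ℤ) ∣ d - 4 := by
        exact_mod_cast (ZMod.intCast_zmod_eq_zero_iff_dvd (d - 4) 8).mp hcast
      obtain ⟨k, hk⟩ := h8dvd
      have hde : d = 4 * (2 * k + 1) := by omega
      have heodd : Odd (2 * k + 1) := ⟨k, by ring⟩
      -- 4*(2k+1) ∣ 8*(m^2+16)  ⇒  (2k+1) ∣ 2*(m^2+16)
      have he2 : (2 * k + 1) ∣ 2 * (m ^ 2 + 16) := by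
        rcases h8 with ⟨c, hc⟩
        refine ⟨c, ?_⟩
        rw [hde] at hc
        have h4 : (4:ℤ) * (2 * (m ^ 2 + 16)) = 4 * ((2 * k + 1) * c) := by
          linear_combination hc
        exact mul_left_cancel₀ (by norm_num) h4
      have heN : (2 * k + 1) ∣ (m ^ 2 + 16) := by
        have := (odd_isCoprime_two heodd).dvd_of_dvd_mul_left he2
        exact this
      rw [hde]
      exact mul_dvd_mul_left 4 heN
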